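/- For every positive integer J and every complex number z with |z| ≤ 1 and z^j ≠ 1 for all 1 ≤ j ≤ J, one has ∑_{j=1}^J (1 - j/(J+1)) log|1 - z^j| ≤ (1/2) log(J/2 + 1) + 1/2. -/

import Mathlib

open Finset Matrix ComplexOrder

lemma amgm {ι : Type*} [Fintype ι] (lam : ι → ℝ) (h0 : ∀ i, 0 ≤ lam i) (c : ℝ)
    (hsum : ∑ i, lam i ≤ (Fintype.card ι : ℝ) * c) :
    ∏ i, lam i ≤ c ^ (Fintype.card ι) := by
  set n := Fintype.card ι with hn
  rcases Nat.eq_zero_or_pos n with h | h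
  · rw [h]
    have : IsEmpty ι := Fintype.card_eq_zero_iff.mp (hn ▸ h)
    simp
  · have hnR : (0:ℝ) < n := by exact_mod_cast h
    have key := Real.geom_mean_le_arith_mean_weighted Finset.univ (fun _ => 1 / (n:ℝ)) lam
      (fun i _ => by positivity) (by simp; field_simp; rw [hn]) (fun i _ => h0 i)
    have h1 : ∏ i, lam i ^ (1 / (n:ℝ)) ≤ c := by
      refine key.trans ?_
      have e : ∑ i, (1 / (n:ℝ)) * lam i = (∑ i, lam i) / n := by
        rw [Finset.sum_div]; exact Finset.sum_congr rfl fun i _ => by ring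
      rw [e, div_le_iff₀ hnR]
      linarith [hsum]
    have h2 : (∏ i, lam i ^ (1 / (n:ℝ))) ^ n = ∏ i, lam i := by
      rw [← Finset.prod_pow]
      refine Finset.prod_congr rfl fun i _ => ?_
      rw [← Real.rpow_natCast (lam i ^ (1 / (n:ℝ))) n, ← Real.rpow_mul (h0 i)]
      rw [one_div, inv_mul_cancel₀ (by exact_mod_cast h.ne'), Real.rpow_one]
    calc ∏ i, lam i = (∏ i, lam i ^ (1 / (n:ℝ))) ^ n := h2.symm
      _ ≤ c ^ n := pow_le_pow_left₀ (Finset.prod_nonneg fun i _ => Real.rpow_nonneg (h0 i) _) h1 n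

lemma det_unimodular_bound (n : ℕ) (M : Matrix (Fin n) (Fin n) ℂ)
    (h : ∀ i j, ‖M i j‖ = 1) :
    (‖M.det‖) ^ 2 ≤ (n : ℝ) ^ n := by
  set G := Mᴴ * M with hGdef
  have hG : G.PosSemidef := Matrix.posSemidef_conjTranspose_mul_self M
  have hH : G.IsHermitian := hG.isHermitian
  set lam := hH.eigenvalues with hlam
  have hdet : ((‖M.det‖ ^ 2 : ℝ) : ℂ) = G.det := by
    rw [hGdef, Matrix.det_mul, Matrix.det_conjTranspose]
    rw [Complex.star_def, mul_comm, Complex.mul_conj]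
    norm_cast
    rw [← Complex.sq_norm]
  have hprod : (‖M.det‖) ^ 2 = ∏ i, lam i := by
    have h2 : ((‖M.det‖ ^ 2 : ℝ) : ℂ) = ((∏ i, lam i : ℝ) : ℂ) := by
      rw [hdet, hH.det_eq_prod_eigenvalues]
      norm_cast
    exact_mod_cast h2
  have hGdiag : ∀ i, G i i = (n : ℂ) := by
    intro i
    simp only [hGdef, Matrix.mul_apply, Matrix.conjTranspose_apply]
    have e : ∀ k : Fin n, star (M k i) * M k i = 1 := by
      intro k
      rw [Complex.star_def, mul_comm, Complex.mul_conj]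
      norm_cast
      rw [← Complex.sq_norm, h k i, one_pow]
    rw [Finset.sum_congr rfl fun k _ => e k]
    simp
  have htr : ∑ i, lam i = (n:ℝ) * n := by
    have hdiag := hH.conjStarAlgAut_star_eigenvectorUnitary
    rw [Unitary.conjStarAlgAut_star_apply] at hdiag
    have t1 : (Matrix.diagonal (RCLike.ofReal ∘ lam)).trace =
        ((star (hH.eigenvectorUnitary : Matrix (Fin n) (Fin n) ℂ)) * G *
          (hH.eigenvectorUnitary : Matrix (Fin n) (Fin n) ℂ)).trace := by rw [hdiag]
    rw [Matrix.trace_diagonal, Matrix.trace_mul_cycle, ← Matrix.mul_assoc,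
      (Matrix.mem_unitaryGroup_iff).mp (hH.eigenvectorUnitary).2, Matrix.one_mul] at t1
    have t2 : G.trace = ((n:ℝ) * n : ℝ) := by
      rw [Matrix.trace]
      have : ∀ i : Fin n, G.diag i = (n : ℂ) := fun i => hGdiag i
      rw [Finset.sum_congr rfl fun i _ => this i]
      simp
    rw [t2] at t1
    have : ((∑ i, lam i : ℝ) : ℂ) = (((n:ℝ) * n : ℝ) : ℂ) := by
      push_cast
      push_cast at t1
      convert t1 using 1
      rfl
    exact_mod_cast this
  have hnonneg : ∀ i, 0 ≤ lam i := fun i => hG.eigenvalues_nonneg i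
  have hcard : Fintype.card (Fin n) = n := Fintype.card_fin n
  have := amgm lam hnonneg (n:ℝ) (by rw [htr, hcard])
  rw [hprod]
  rw [hcard] at this
  exact this

lemma count_prod (J : ℕ) (F : ℕ → ℝ) :
    ∏ i : Fin (J+1), ∏ j ∈ Finset.Ioi i, F ((j:ℕ) - (i:ℕ)) =
      ∏ d ∈ Finset.Icc 1 J, F d ^ (J+1-d) := by
  have inner : ∀ i : Fin (J+1), ∏ j ∈ Finset.Ioi i, F ((j:ℕ) - (i:ℕ)) =
      ∏ d ∈ Finset.Icc 1 (J - (i:ℕ)), F d := by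
    intro i
    refine Finset.prod_nbij' (fun j => (j:ℕ) - (i:ℕ))
      (fun d => (⟨((i:ℕ) + d) % (J+1), Nat.mod_lt _ (by omega)⟩ : Fin (J+1))) ?_ ?_ ?_ ?_ ?_
    · intro j hj
      rw [Finset.mem_Ioi] at hj
      rw [Finset.mem_Icc]
      have h1 := j.isLt
      have h2 : (i:ℕ) < (j:ℕ) := hj
      show 1 ≤ (j:ℕ) - (i:ℕ) ∧ (j:ℕ) - (i:ℕ) ≤ J - (i:ℕ)
      omega
    · intro d hd
      rw [Finset.mem_Icc] at hd
      rw [Finset.mem_Ioi]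
      show i < _
      rw [Fin.lt_def]
      have h1 := i.isLt
      simp only []
      rw [Nat.mod_eq_of_lt (by omega)]
      omega
    · intro j hj
      rw [Finset.mem_Ioi] at hj
      have h2 : (i:ℕ) < (j:ℕ) := hj
      have h1 := j.isLt
      apply Fin.ext
      simp only []
      rw [Nat.mod_eq_of_lt (by omega)]
      omega
    · intro d hd
      rw [Finset.mem_Icc] at hd
      have h1 := i.isLt
      simp only []
      rw [Nat.mod_eq_of_lt (by omega)]
      omega
    · intro j hj
      rfl
  rw [Finset.prod_congr rfl fun i _ => inner i]
  rw [Fin.prod_univ_eq_prod_range (fun i => ∏ d ∈ Finset.Icc 1 (J - i), F d) (J+1)]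
  have step : ∀ i, i ∈ Finset.range (J+1) → ∏ d ∈ Finset.Icc 1 (J - i), F d =
      ∏ d ∈ Finset.Icc 1 J, if i + d ≤ J then F d else 1 := by
    intro i _
    rw [← Finset.prod_filter]
    congr 1
    ext a
    simp only [Finset.mem_Icc, Finset.mem_filter]
    omega
  rw [Finset.prod_congr rfl step, Finset.prod_comm]
  refine Finset.prod_congr rfl fun d hd => ?_
  rw [Finset.mem_Icc] at hd
  rw [← Finset.prod_filter, Finset.prod_const]
  congr 1
  have : Finset.filter (fun i => i + d ≤ J) (Finset.range (J+1)) = Finset.range (J+1-d) := by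
    ext a
    simp only [Finset.mem_filter, Finset.mem_range]
    omega
  rw [this, Finset.card_range]

lemma boundary_bound (J : ℕ) (w : ℂ) (hw : ‖w‖ = 1) :
    ‖∏ d ∈ Finset.Icc 1 J, (1 - w^d)^(J+1-d)‖ ≤
      Real.sqrt (((J:ℝ)+1) ^ (J+1)) := by
  have habs : ‖∏ d ∈ Finset.Icc 1 J, (1 - w^d)^(J+1-d)‖ =
      ∏ d ∈ Finset.Icc 1 J, (‖1 - w^d‖) ^ (J+1-d) := by
    rw [norm_prod]
    exact Finset.prod_congr rfl fun d _ => norm_pow _ _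
  rw [habs, ← count_prod J (fun d => ‖1 - w^d‖)]
  set V := Matrix.vandermonde (fun i : Fin (J+1) => w^(i:ℕ)) with hV
  have hdet : ‖V.det‖ =
      ∏ i : Fin (J+1), ∏ j ∈ Finset.Ioi i, ‖1 - w^((j:ℕ) - (i:ℕ))‖ := by
    rw [hV, Matrix.det_vandermonde, norm_prod]
    refine Finset.prod_congr rfl fun i _ => ?_
    rw [norm_prod]
    refine Finset.prod_congr rfl fun j hj => ?_
    rw [Finset.mem_Ioi] at hj
    have hij : (i:ℕ) ≤ (j:ℕ) := le_of_lt hj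
    have key : w^(j:ℕ) - w^(i:ℕ) = w^(i:ℕ) * (w^((j:ℕ)-(i:ℕ)) - 1) := by
      rw [mul_sub, mul_one, ← pow_add]
      have : (i:ℕ) + ((j:ℕ) - (i:ℕ)) = (j:ℕ) := by omega
      rw [this]
    rw [key, norm_mul, norm_pow, hw, one_pow, one_mul, norm_sub_rev]
  rw [← hdet]
  have hsq := det_unimodular_bound (J+1) V (by
    intro i j
    rw [hV]
    simp only [Matrix.vandermonde]
    rw [Matrix.of_apply, ← pow_mul, norm_pow, hw, one_pow])
  have h0 : (0:ℝ) ≤ ‖V.det‖ := norm_nonneg _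
  calc ‖V.det‖ = Real.sqrt ((‖V.det‖)^2) := (Real.sqrt_sq h0).symm
    _ ≤ Real.sqrt (((J+1:ℕ):ℝ) ^ (J+1)) := Real.sqrt_le_sqrt hsq
    _ = Real.sqrt (((J:ℝ)+1) ^ (J+1)) := by norm_num

lemma interior_bound (J : ℕ) (z : ℂ) (hz : ‖z‖ ≤ 1) :
    ‖∏ d ∈ Finset.Icc 1 J, (1 - z^d)^(J+1-d)‖ ≤
      Real.sqrt (((J:ℝ)+1) ^ (J+1)) := by
  set g : ℂ → ℂ := fun x => ∏ d ∈ Finset.Icc 1 J, (1 - x^d)^(J+1-d) with hg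
  have hdiff : Differentiable ℂ g := by
    apply Differentiable.fun_finsetProd
    intro d _
    apply Differentiable.pow
    exact (differentiable_const (1:ℂ)).sub (differentiable_pow d)
  have := Complex.norm_le_of_forall_mem_frontier_norm_le (f := g)
    (U := Metric.ball (0:ℂ) 1) Metric.isBounded_ball hdiff.diffContOnCl
    (C := Real.sqrt (((J:ℝ)+1) ^ (J+1))) ?_ (z := z) ?_
  · rw [hg] at this; exact this
  · intro w hw
    rw [frontier_ball (0:ℂ) one_ne_zero] at hw
    have : ‖w‖ = 1 := by
      simpa [Complex.dist_eq] using hw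
    rw [hg]; exact boundary_bound J w this
  · rw [closure_ball (0:ℂ) one_ne_zero]
    simpa [Complex.dist_eq] using hz

theorem stmt_3 (J : ℕ) (hJ : 0 < J) (z : ℂ) (hz : ‖z‖ ≤ 1)
    (hroots : ∀ j : ℕ, 1 ≤ j → j ≤ J → z ^ j ≠ 1) :
    ∑ j ∈ Finset.Icc 1 J, (1 - (j : ℝ) / ((J : ℝ) + 1)) * Real.log (‖1 - z ^ j‖) ≤
      (1 / 2) * Real.log ((J : ℝ) / 2 + 1) + 1 / 2 := by
  set F : ℕ → ℝ := fun j => ‖1 - z ^ j‖ with hF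
  have hFpos : ∀ j ∈ Finset.Icc 1 J, 0 < F j := by
    intro j hj
    rw [Finset.mem_Icc] at hj
    have : 1 - z ^ j ≠ 0 := sub_ne_zero.mpr fun h => hroots j hj.1 hj.2 h.symm
    simpa [hF] using norm_pos_iff.mpr this
  set P : ℂ := ∏ d ∈ Finset.Icc 1 J, (1 - z^d)^(J+1-d) with hP
  have habsP : ‖P‖ = ∏ d ∈ Finset.Icc 1 J, F d ^ (J+1-d) := by
    rw [hP, norm_prod]
    exact Finset.prod_congr rfl fun d _ => norm_pow _ _
  have hPpos : 0 < ‖P‖ := by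
    rw [habsP]
    exact Finset.prod_pos fun d hd => pow_pos (hFpos d hd) _
  have hlog : Real.log (‖P‖) =
      ∑ d ∈ Finset.Icc 1 J, ((J+1-d : ℕ) : ℝ) * Real.log (F d) := by
    rw [habsP, Real.log_prod (fun d hd => (pow_pos (hFpos d hd) _).ne')]
    exact Finset.sum_congr rfl fun d _ => Real.log_pow _ _
  have hsum : ∑ j ∈ Finset.Icc 1 J, (1 - (j : ℝ) / ((J : ℝ) + 1)) * Real.log (F j)
      = Real.log (‖P‖) / ((J:ℝ)+1) := by
    rw [hlog, Finset.sum_div]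
    refine Finset.sum_congr rfl fun j hj => ?_
    rw [Finset.mem_Icc] at hj
    have hcast : ((J+1-j : ℕ) : ℝ) = (J:ℝ) + 1 - j := by
      have : j ≤ J + 1 := by omega
      push_cast [Nat.cast_sub this]
      ring
    rw [hcast]
    have hne : (J:ℝ) + 1 ≠ 0 := by positivity
    field_simp
  rw [hsum]
  have hlogle : Real.log (‖P‖) ≤ ((J:ℝ)+1) * Real.log ((J:ℝ)+1) / 2 := by
    have h1 := Real.log_le_log hPpos (interior_bound J z hz)
    rw [Real.log_sqrt (by positivity), Real.log_pow] at h1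
    push_cast at h1
    linarith
  have hJ1 : (0:ℝ) < (J:ℝ) + 1 := by positivity
  have step1 : Real.log (‖P‖) / ((J:ℝ)+1) ≤ Real.log ((J:ℝ)+1) / 2 := by
    rw [div_le_iff₀ hJ1]
    calc Real.log (‖P‖) ≤ ((J:ℝ)+1) * Real.log ((J:ℝ)+1) / 2 := hlogle
      _ = Real.log ((J:ℝ)+1) / 2 * ((J:ℝ)+1) := by ring
  refine step1.trans ?_
  have h2 : Real.log ((J:ℝ)+1) ≤ Real.log ((J:ℝ)/2+1) + 1 := by
    have e1 : Real.log ((J:ℝ)+1) ≤ Real.log (2 * ((J:ℝ)/2+1)) := by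
      apply Real.log_le_log hJ1
      linarith
    rw [Real.log_mul (by norm_num) (by positivity)] at e1
    have : Real.log 2 ≤ 1 := by
      have := Real.log_two_lt_d9
      linarith
    linarith
  linarith
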